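/- arXiv:2308.04023 — 3 statements merged into one kernel-verified Lean document; each statement's English description precedes it below -/
import Mathlib

section
/- Let g1, g2 ∈ SL(d, ℝ) with singular value decompositions g1 = m1 a1 ℓ1 and g2 = m2 a2 ℓ2. Then σ1(g1)·σ1(g2)·sin(θ) ≤ σ1(g1 g2) ≤ σ1(g1)·σ1(g2), where σ1 denotes the largest singular value and θ is the Euclidean angle between the line m2⟨e1⟩ and the hyperplane ℓ1⁻¹⟨e2, …, e_d⟩. -/
/-- The largest singular value of a real `d × d` matrix, i.e. its operator norm
as a map of Euclidean space. -/
noncomputable def sigma1 {d : ℕ} (A : Matrix (Fin d) (Fin d) ℝ) : ℝ :=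
  ‖Matrix.toEuclideanCLM (𝕜 := ℝ) A‖

namespace Sigma1Aux

open Matrix

variable {d : ℕ}

/-- Norm on Euclidean space as sqrt of dot product. -/
lemma norm_symm (v : Fin d → ℝ) :
    ‖(WithLp.equiv 2 (Fin d → ℝ)).symm v‖ = Real.sqrt (v ⬝ᵥ v) := by
  rw [EuclideanSpace.norm_eq]
  congr 1
  simp [dotProduct, Real.norm_eq_abs, sq_abs, pow_two]

lemma orth_dot (m : Matrix (Fin d) (Fin d) ℝ) (hm : mᵀ * m = 1) (v : Fin d → ℝ) :
    (m.mulVec v) ⬝ᵥ (m.mulVec v) = v ⬝ᵥ v := by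
  rw [dotProduct_mulVec, ← mulVec_transpose, mulVec_mulVec, hm, one_mulVec]

lemma orth_norm (m : Matrix (Fin d) (Fin d) ℝ) (hm : mᵀ * m = 1) (v : Fin d → ℝ) :
    ‖(WithLp.equiv 2 (Fin d → ℝ)).symm (m.mulVec v)‖ =
      ‖(WithLp.equiv 2 (Fin d → ℝ)).symm v‖ := by
  rw [norm_symm, norm_symm, orth_dot m hm]

lemma le_sigma1 (A : Matrix (Fin d) (Fin d) ℝ) (v : Fin d → ℝ) :
    ‖(WithLp.equiv 2 (Fin d → ℝ)).symm (A.mulVec v)‖ ≤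
      sigma1 A * ‖(WithLp.equiv 2 (Fin d → ℝ)).symm v‖ := by
  have h := (Matrix.toEuclideanCLM (𝕜 := ℝ) A).le_opNorm ((WithLp.equiv 2 (Fin d → ℝ)).symm v)
  exact h

lemma sigma1_le (A : Matrix (Fin d) (Fin d) ℝ) {C : ℝ} (hC : 0 ≤ C)
    (h : ∀ v : Fin d → ℝ, ‖(WithLp.equiv 2 (Fin d → ℝ)).symm (A.mulVec v)‖ ≤
      C * ‖(WithLp.equiv 2 (Fin d → ℝ)).symm v‖) : sigma1 A ≤ C := by
  apply ContinuousLinearMap.opNorm_le_bound _ hC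
  intro x
  rw [← (WithLp.equiv 2 (Fin d → ℝ)).symm_apply_apply x]
  exact h _

lemma sigma1_orth_mul (m A : Matrix (Fin d) (Fin d) ℝ) (hm : mᵀ * m = 1) :
    sigma1 (m * A) = sigma1 A := by
  apply le_antisymm
  · apply sigma1_le _ (norm_nonneg _)
    intro v
    rw [← mulVec_mulVec, orth_norm m hm]
    exact le_sigma1 A v
  · apply sigma1_le _ (norm_nonneg _)
    intro v
    rw [← orth_norm m hm, mulVec_mulVec]
    exact le_sigma1 (m * A) v

lemma sigma1_mul_orth (A l : Matrix (Fin d) (Fin d) ℝ) (hl : lᵀ * l = 1) :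
    sigma1 (A * l) = sigma1 A := by
  have hl' : l * lᵀ = 1 := mul_eq_one_comm.mp hl
  have hlT : lᵀᵀ * lᵀ = 1 := by rwa [transpose_transpose]
  apply le_antisymm
  · apply sigma1_le _ (norm_nonneg _)
    intro v
    rw [← mulVec_mulVec, ← orth_norm l hl v]
    exact le_sigma1 A _
  · apply sigma1_le _ (norm_nonneg _)
    intro v
    have h2 : A.mulVec v = (A * l).mulVec (lᵀ.mulVec v) := by
      rw [mulVec_mulVec, Matrix.mul_assoc, hl', Matrix.mul_one]
    rw [h2, ← orth_norm lᵀ hlT v]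
    exact le_sigma1 (A * l) _

lemma norm_single (i : Fin d) :
    ‖(WithLp.equiv 2 (Fin d → ℝ)).symm (Pi.single i 1 : Fin d → ℝ)‖ = 1 := by
  rw [norm_symm, dotProduct_single, Pi.single_eq_same, one_mul, Real.sqrt_one]

lemma sigma1_diagonal (a : Fin d → ℝ) (i0 : Fin d) (hpos : ∀ i, 0 < a i)
    (hmax : ∀ i, a i ≤ a i0) : sigma1 (diagonal a) = a i0 := by
  apply le_antisymm
  · apply sigma1_le _ (hpos i0).le
    intro v
    rw [norm_symm, norm_symm]
    have h1 : (diagonal a).mulVec v ⬝ᵥ (diagonal a).mulVec v ≤ (a i0 * a i0) * (v ⬝ᵥ v) := by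
      simp only [dotProduct, mulVec_diagonal, Finset.mul_sum]
      apply Finset.sum_le_sum
      intro i _
      have h2 := hmax i
      have h3 := hpos i
      have h4 : a i * a i ≤ a i0 * a i0 := mul_le_mul h2 h2 h3.le (h3.trans_le h2).le
      nlinarith [mul_self_nonneg (v i)]
    calc Real.sqrt ((diagonal a).mulVec v ⬝ᵥ (diagonal a).mulVec v)
        ≤ Real.sqrt ((a i0 * a i0) * (v ⬝ᵥ v)) := Real.sqrt_le_sqrt h1
      _ = a i0 * Real.sqrt (v ⬝ᵥ v) := by
          rw [Real.sqrt_mul (mul_self_nonneg _), Real.sqrt_mul_self (hpos i0).le]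
  · have h := le_sigma1 (diagonal a) (Pi.single i0 1)
    rw [norm_single, mul_one] at h
    refine le_trans (le_of_eq ?_) h
    rw [norm_symm]
    have h5 : (diagonal a).mulVec (Pi.single i0 1) = Pi.single i0 (a i0) := by
      funext i
      rw [mulVec_diagonal]
      by_cases hi : i = i0
      · subst hi; simp
      · simp [Pi.single_eq_of_ne hi]
    rw [h5, dotProduct_single, Pi.single_eq_same, Real.sqrt_mul_self (hpos i0).le]

lemma diag_lower (a : Fin d → ℝ) (i0 : Fin d) (hpos : ∀ i, 0 < a i) (w : Fin d → ℝ) :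
    a i0 * |w i0| ≤ ‖(WithLp.equiv 2 (Fin d → ℝ)).symm ((diagonal a).mulVec w)‖ := by
  rw [norm_symm]
  have h1 : (a i0 * w i0) * (a i0 * w i0) ≤ (diagonal a).mulVec w ⬝ᵥ (diagonal a).mulVec w := by
    simp only [dotProduct, mulVec_diagonal]
    exact Finset.single_le_sum (f := fun i => (a i * w i) * (a i * w i))
      (fun i _ => mul_self_nonneg _) (Finset.mem_univ i0)
  calc a i0 * |w i0| = |a i0 * w i0| := by
        rw [abs_mul, abs_of_pos (hpos i0)]
    _ = Real.sqrt ((a i0 * w i0) * (a i0 * w i0)) := (Real.sqrt_mul_self_eq_abs _).symm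
    _ ≤ _ := Real.sqrt_le_sqrt h1

end Sigma1Aux

open Matrix in
/-- If `g1, g2 ∈ SL(d, ℝ)` have singular value decompositions `g1 = m1 a1 l1` and
`g2 = m2 a2 l2` (with `m i, l i` orthogonal and `a i` diagonal with nonincreasing positive
entries), then `σ1(g1) σ1(g2) sin θ ≤ σ1(g1 g2) ≤ σ1(g1) σ1(g2)`, where `θ` is the Euclidean
angle between the line `m2⟨e1⟩` and the hyperplane `l1⁻¹⟨e2,…,e_d⟩`.  Since `m2·e1` and the
unit normal vector `l1ᵀ·e1` of that hyperplane are both unit vectors, the sine of that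
angle is `sin θ = |⟨m2 e1, l1ᵀ e1⟩|`. -/
theorem stmt0 {d : ℕ} (hd : 0 < d)
    (g1 g2 m1 l1 m2 l2 : Matrix (Fin d) (Fin d) ℝ) (a1 a2 : Fin d → ℝ)
    (hg1det : g1.det = 1) (hg2det : g2.det = 1)
    (hm1 : m1ᵀ * m1 = 1) (hl1 : l1ᵀ * l1 = 1) (hm2 : m2ᵀ * m2 = 1) (hl2 : l2ᵀ * l2 = 1)
    (ha1pos : ∀ i, 0 < a1 i) (ha1mono : ∀ i j : Fin d, i ≤ j → a1 j ≤ a1 i)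
    (ha2pos : ∀ i, 0 < a2 i) (ha2mono : ∀ i j : Fin d, i ≤ j → a2 j ≤ a2 i)
    (hsvd1 : g1 = m1 * Matrix.diagonal a1 * l1)
    (hsvd2 : g2 = m2 * Matrix.diagonal a2 * l2)
    (sinθ : ℝ)
    (hsin : sinθ =
      |(m2.mulVec (Pi.single (⟨0, hd⟩ : Fin d) 1)) ⬝ᵥ (l1ᵀ.mulVec (Pi.single (⟨0, hd⟩ : Fin d) 1))|) :
    sigma1 g1 * sigma1 g2 * sinθ ≤ sigma1 (g1 * g2) ∧
      sigma1 (g1 * g2) ≤ sigma1 g1 * sigma1 g2 := by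
  open Sigma1Aux in
  have hle : ∀ i : Fin d, (⟨0, hd⟩ : Fin d) ≤ i := fun i => Fin.mk_le_of_le_val (Nat.zero_le _)
  have hs1 : sigma1 g1 = a1 ⟨0, hd⟩ := by
    rw [hsvd1, sigma1_mul_orth _ _ hl1, sigma1_orth_mul _ _ hm1,
      sigma1_diagonal a1 ⟨0, hd⟩ ha1pos (fun i => ha1mono ⟨0, hd⟩ i (hle i))]
  have hs2 : sigma1 g2 = a2 ⟨0, hd⟩ := by
    rw [hsvd2, sigma1_mul_orth _ _ hl2, sigma1_orth_mul _ _ hm2,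
      sigma1_diagonal a2 ⟨0, hd⟩ ha2pos (fun i => ha2mono ⟨0, hd⟩ i (hle i))]
  constructor
  · -- lower bound
    have hl2' : l2 * l2ᵀ = 1 := mul_eq_one_comm.mp hl2
    have hl2T : l2ᵀᵀ * l2ᵀ = 1 := by rwa [transpose_transpose]
    have hnu : ‖(WithLp.equiv 2 (Fin d → ℝ)).symm
        (l2ᵀ.mulVec (Pi.single (⟨0, hd⟩ : Fin d) 1))‖ = 1 := by
      rw [orth_norm l2ᵀ hl2T, norm_single]
    have hde : (diagonal a2).mulVec (Pi.single (⟨0, hd⟩ : Fin d) 1) =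
        a2 ⟨0, hd⟩ • (Pi.single (⟨0, hd⟩ : Fin d) 1 : Fin d → ℝ) := by
      funext i
      rw [mulVec_diagonal]
      by_cases hi : i = ⟨0, hd⟩
      · subst hi; simp
      · simp [Pi.single_eq_of_ne hi]
    have hg2u : g2.mulVec (l2ᵀ.mulVec (Pi.single (⟨0, hd⟩ : Fin d) 1)) =
        a2 ⟨0, hd⟩ • m2.mulVec (Pi.single (⟨0, hd⟩ : Fin d) 1) := by
      rw [hsvd2, mulVec_mulVec, Matrix.mul_assoc (m2 * diagonal a2) l2 l2ᵀ, hl2',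
        Matrix.mul_one, ← mulVec_mulVec (Pi.single (⟨0, hd⟩ : Fin d) 1) m2 (diagonal a2),
        hde, mulVec_smul]
    have hgu : (g1 * g2).mulVec (l2ᵀ.mulVec (Pi.single (⟨0, hd⟩ : Fin d) 1)) =
        a2 ⟨0, hd⟩ • g1.mulVec (m2.mulVec (Pi.single (⟨0, hd⟩ : Fin d) 1)) := by
      rw [← mulVec_mulVec _ g1 g2, hg2u, mulVec_smul]
    have hw : sinθ = |(l1.mulVec (m2.mulVec (Pi.single (⟨0, hd⟩ : Fin d) 1))) ⟨0, hd⟩| := by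
      rw [hsin]
      congr 1
      rw [dotProduct_comm, mulVec_transpose, ← dotProduct_mulVec, single_dotProduct, one_mul]
    have hg1v : a1 ⟨0, hd⟩ * sinθ ≤ ‖(WithLp.equiv 2 (Fin d → ℝ)).symm
        (g1.mulVec (m2.mulVec (Pi.single (⟨0, hd⟩ : Fin d) 1)))‖ := by
      have h6 : g1.mulVec (m2.mulVec (Pi.single (⟨0, hd⟩ : Fin d) 1)) =
          m1.mulVec ((diagonal a1).mulVec
            (l1.mulVec (m2.mulVec (Pi.single (⟨0, hd⟩ : Fin d) 1)))) := by
        conv_rhs => rw [mulVec_mulVec, mulVec_mulVec, ← hsvd1]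
      rw [h6, orth_norm m1 hm1, hw]
      exact diag_lower a1 ⟨0, hd⟩ ha1pos _
    have key := le_sigma1 (g1 * g2) (l2ᵀ.mulVec (Pi.single (⟨0, hd⟩ : Fin d) 1))
    rw [hnu, mul_one, hgu] at key
    have hns : (WithLp.equiv 2 (Fin d → ℝ)).symm
        (a2 ⟨0, hd⟩ • g1.mulVec (m2.mulVec (Pi.single (⟨0, hd⟩ : Fin d) 1))) =
        a2 ⟨0, hd⟩ • (WithLp.equiv 2 (Fin d → ℝ)).symm
          (g1.mulVec (m2.mulVec (Pi.single (⟨0, hd⟩ : Fin d) 1))) := rfl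
    rw [hns, norm_smul, Real.norm_eq_abs, abs_of_pos (ha2pos ⟨0, hd⟩)] at key
    calc sigma1 g1 * sigma1 g2 * sinθ = a2 ⟨0, hd⟩ * (a1 ⟨0, hd⟩ * sinθ) := by
          rw [hs1, hs2]; ring
      _ ≤ a2 ⟨0, hd⟩ * ‖(WithLp.equiv 2 (Fin d → ℝ)).symm
            (g1.mulVec (m2.mulVec (Pi.single (⟨0, hd⟩ : Fin d) 1)))‖ :=
          mul_le_mul_of_nonneg_left hg1v (ha2pos ⟨0, hd⟩).le
      _ ≤ sigma1 (g1 * g2) := key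
  · -- upper bound
    show ‖Matrix.toEuclideanCLM (𝕜 := ℝ) (g1 * g2)‖ ≤ _
    rw [_root_.map_mul]
    exact norm_mul_le _ _
end

section
/- Let Γ be a group and φ : Γ → ℝ a function with φ(γ⁻¹) = φ(γ) for all γ. Suppose γ ∈ Γ has infinite order and there is C ≥ 0 such that φ(γ^{n+m}) ≥ φ(γ^n) + φ(γ^m) − C for all n, m ≥ 1. If moreover φ(γ^n) → +∞ as n → ∞, then the critical exponent of the series s ↦ Σ_{n ∈ ℤ} e^{-s φ(γ^n)} is 0, i.e. the series converges for every s > 0. -/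
open scoped ENNReal

/-- If `φ : Γ → ℝ` is symmetric (`φ(γ⁻¹) = φ(γ)`), `γ` has infinite order,
`φ(γ^{n+m}) ≥ φ(γ^n) + φ(γ^m) − C` for all `n, m ≥ 1`, and `φ(γ^n) → +∞`, then the
series `Σ_{n ∈ ℤ} e^{-s φ(γ^n)}` converges for every `s > 0` (i.e. its critical exponent
is `0`). -/
theorem stmt11 {Γ : Type*} [Group Γ] (φ : Γ → ℝ)
    (hsym : ∀ γ : Γ, φ γ⁻¹ = φ γ)
    (γ : Γ) (hord : ¬ IsOfFinOrder γ)
    (C : ℝ) (hC : 0 ≤ C)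
    (hsuper : ∀ n m : ℕ, 1 ≤ n → 1 ≤ m → φ (γ ^ (n + m)) ≥ φ (γ ^ n) + φ (γ ^ m) - C)
    (htend : Filter.Tendsto (fun n : ℕ => φ (γ ^ n)) Filter.atTop Filter.atTop) :
    ∀ s : ℝ, 0 < s → (∑' n : ℤ, ENNReal.ofReal (Real.exp (-s * φ (γ ^ n)))) < ⊤ := by
  intro s hs
  -- Step 1: a linear lower bound on φ(γ^n) for n ≥ 1.
  obtain ⟨a, ha, b, hab⟩ : ∃ a : ℝ, 0 < a ∧ ∃ b : ℝ, ∀ n : ℕ, 1 ≤ n →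
      a * n - b ≤ φ (γ ^ n) := by
    obtain ⟨N₀, hN₀⟩ := Filter.eventually_atTop.mp (htend.eventually_ge_atTop (C + 1))
    set N : ℕ := max N₀ 1 with hNdef
    have hN1 : 1 ≤ N := le_max_right _ _
    have hNpos : (0 : ℝ) < N := by exact_mod_cast hN1
    set fN : ℝ := φ (γ ^ N) - C with hfNdef
    have hfN : 0 < fN := by
      have := hN₀ N (le_max_left _ _)
      simp only [hfNdef]; linarith
    -- M : a uniform lower bound on φ(γ^r) - C for 1 ≤ r ≤ N, and M ≤ 0
    obtain ⟨M, hM0, hMle⟩ : ∃ M : ℝ, M ≤ 0 ∧ ∀ r : ℕ, 1 ≤ r → r ≤ N → M ≤ φ (γ ^ r) - C := by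
      have hne : (Finset.Icc 1 N).Nonempty := ⟨1, by simp [hN1]⟩
      refine ⟨min 0 ((Finset.Icc 1 N).inf' hne (fun r => φ (γ ^ r) - C)),
        min_le_left _ _, fun r h1 h2 => ?_⟩
      exact le_trans (min_le_right _ _) (Finset.inf'_le _ (Finset.mem_Icc.mpr ⟨h1, h2⟩))
    -- key claim by strong induction
    have key : ∀ n : ℕ, 1 ≤ n → ((n / N : ℕ) : ℝ) * fN + M ≤ φ (γ ^ n) - C := by
      intro n
      induction n using Nat.strong_induction_on with
      | _ n ih =>
        intro hn1
        by_cases hlt : n < N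
        · rw [Nat.div_eq_of_lt hlt]
          have := hMle n hn1 hlt.le
          push_cast
          linarith
        · push_neg at hlt
          have hNn : N ≤ n := hlt
          rcases eq_or_lt_of_le hNn with heq | _
          · rw [← heq, Nat.div_self (by omega)]
            push_cast
            linarith
          have hsub1 : 1 ≤ n - N ∨ n = N := by omega
          rcases hsub1 with hsub1 | rfl
          · have ihn := ih (n - N) (by omega) hsub1
            have hsup := hsuper (n - N) N hsub1 hN1
            rw [Nat.sub_add_cancel hNn] at hsup
            have hdiv : n / N = (n - N) / N + 1 :=
              Nat.div_eq_sub_div (by omega) hNn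
            rw [hdiv]
            push_cast
            linarith
          · omega
    -- convert to a linear bound
    refine ⟨fN / N, div_pos hfN hNpos, fN - M - C, fun n hn => ?_⟩
    have hk := key n hn
    have hdm : (N : ℝ) * ((n / N : ℕ) : ℝ) + ((n % N : ℕ) : ℝ) = (n : ℝ) := by
      exact_mod_cast Nat.div_add_mod n N
    have hmod : ((n % N : ℕ) : ℝ) < N := by
      exact_mod_cast Nat.mod_lt n (by omega)
    have h1 : (n : ℝ) / N - 1 < ((n / N : ℕ) : ℝ) := by
      rw [div_sub_one (ne_of_gt hNpos), div_lt_iff₀ hNpos]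
      nlinarith
    have h2 : (fN / N) * n - fN ≤ ((n / N : ℕ) : ℝ) * fN := by
      have : (fN / N) * n - fN = ((n : ℝ) / N - 1) * fN := by
        field_simp
      rw [this]
      exact mul_le_mul_of_nonneg_right h1.le hfN.le
    linarith
  -- Step 2: summability over ℕ
  have hr1 : Real.exp (-(s * a)) < 1 := Real.exp_lt_one_iff.mpr (by nlinarith)
  have hgeo : Summable (fun n : ℕ => Real.exp (s * b) * Real.exp (-(s * a)) ^ n) :=
    (summable_geometric_of_lt_one (Real.exp_nonneg _) hr1).mul_left _
  have hnat : Summable (fun n : ℕ => Real.exp (-s * φ (γ ^ n))) := by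
    refine Summable.of_norm_bounded_eventually hgeo ?_
    rw [Nat.cofinite_eq_atTop]
    filter_upwards [Filter.eventually_ge_atTop 1] with n hn
    rw [Real.norm_eq_abs, abs_of_pos (Real.exp_pos _), ← Real.exp_nat_mul,
      ← Real.exp_add]
    apply Real.exp_le_exp.mpr
    have := hab n hn
    nlinarith [this]
  -- Step 3: summability over ℤ, using symmetry
  have hneg : ∀ n : ℕ, φ (γ ^ (-(n : ℤ))) = φ (γ ^ (n : ℤ)) := by
    intro n
    rw [zpow_neg, hsym]
  have hzsum : Summable (fun n : ℤ => Real.exp (-s * φ (γ ^ n))) := by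
    apply Summable.of_nat_of_neg
    · exact hnat.congr (by intro n; rw [zpow_natCast])
    · refine hnat.congr (fun n => ?_)
      rw [hneg n, zpow_natCast]
  have hpos : ∀ n : ℤ, 0 ≤ Real.exp (-s * φ (γ ^ n)) := fun n => (Real.exp_pos _).le
  rw [← ENNReal.ofReal_tsum_of_nonneg hpos hzsum]
  exact ENNReal.ofReal_lt_top
end

section
/- Let Q : f ↦ Σ_{γ ∈ Γ} h(e^{f(γ)}) e^{-s f(γ)} where Γ is countable, f : Γ → [0, ∞) is proper (i.e. {γ : f(γ) ≤ T} is finite for every T), and suppose the critical exponent δ of s ↦ Σ_γ e^{-s f(γ)} is finite. Then (Patterson's lemma) there exists a continuous nondecreasing function h : (0,∞) → (0,∞) such that: (a) the series Σ_{γ} h(e^{f(γ)}) e^{-s f(γ)} converges for s > δ and diverges for s ≤ δ; and (b) for every ε > 0 there exists ν0 > 0 such that h(ν t) ≤ t^ε h(ν) whenever t > 1 and ν > ν0. -/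
open scoped ENNReal

open scoped ENNReal
open Finset

namespace PattersonAux

/-- clamp of `u` into the interval `[T n, T (n+1)]`, shifted to start at 0. -/
noncomputable def clamp (T : ℕ → ℝ) (n : ℕ) (u : ℝ) : ℝ :=
  max 0 (min (u - T n) (T (n+1) - T n))

/-- piecewise linear function with slope `eps n` on `[T n, T (n+1)]`. -/
noncomputable def pg (eps T : ℕ → ℝ) (u : ℝ) : ℝ :=
  ∑' n, eps n * clamp T n u

section lemmas

variable {eps T : ℕ → ℝ}

theorem Tmono (hTstep : ∀ n, T n + 1 ≤ T (n+1)) : Monotone T := by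
  apply monotone_nat_of_le_succ
  intro n; linarith [hTstep n]

theorem Tge (hT0 : T 0 = 0) (hTstep : ∀ n, T n + 1 ≤ T (n+1)) (n : ℕ) : (n : ℝ) ≤ T n := by
  induction n with
  | zero => simp [hT0]
  | succ n ih => push_cast; linarith [hTstep n]

theorem clamp_mono (T : ℕ → ℝ) (n : ℕ) : Monotone (clamp T n) := by
  intro a b hab
  exact max_le_max le_rfl (min_le_min (by linarith) le_rfl)

theorem clamp_eq_zero {n : ℕ} {u : ℝ} (h : u ≤ T n) :
    clamp T n u = 0 := by
  have : min (u - T n) (T (n+1) - T n) ≤ 0 := le_trans (min_le_left _ _) (by linarith)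
  simp [clamp, max_eq_left this]

theorem clamp_eq_len (hTstep : ∀ n, T n + 1 ≤ T (n+1)) {n : ℕ} {u : ℝ} (h : T (n+1) ≤ u) :
    clamp T n u = T (n+1) - T n := by
  have h1 : T (n+1) - T n ≤ u - T n := by linarith
  have h2 : (0:ℝ) ≤ T (n+1) - T n := by linarith [hTstep n]
  simp [clamp, min_eq_right h1, max_eq_right h2]

theorem clamp_eq_mid (hTstep : ∀ n, T n + 1 ≤ T (n+1)) {n : ℕ} {u : ℝ}
    (h1 : T n ≤ u) (h2 : u ≤ T (n+1)) : clamp T n u = u - T n := by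
  have : min (u - T n) (T (n+1) - T n) = u - T n := min_eq_left (by linarith)
  simp [clamp, this, max_eq_right (by linarith : (0:ℝ) ≤ u - T n)]

theorem pg_eq_sum (hTstep : ∀ n, T n + 1 ≤ T (n+1)) {N : ℕ} {u : ℝ} (h : u ≤ T N) :
    pg eps T u = ∑ n ∈ range N, eps n * clamp T n u := by
  apply tsum_eq_sum
  intro n hn
  rw [clamp_eq_zero (le_trans h (Tmono hTstep (by simpa using hn))), mul_zero]

theorem sumclamp_ge (hTstep : ∀ n, T n + 1 ≤ T (n+1)) {M : ℕ} {u : ℝ} (h : T M ≤ u) :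
    ∑ n ∈ range M, clamp T n u = T M - T 0 := by
  have : ∀ n ∈ range M, clamp T n u = T (n+1) - T n := by
    intro n hn
    exact clamp_eq_len hTstep (le_trans (Tmono hTstep (by simpa using hn)) h)
  rw [Finset.sum_congr rfl this, Finset.sum_range_sub (fun n => T n)]

theorem sumclamp_le (hTstep : ∀ n, T n + 1 ≤ T (n+1)) {M : ℕ} {u : ℝ}
    (h0 : T 0 ≤ u) (h : u ≤ T M) : ∑ n ∈ range M, clamp T n u = u - T 0 := by
  induction M with
  | zero => simp; linarith [le_antisymm h h0]
  | succ M ih =>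
    rw [Finset.sum_range_succ]
    rcases le_or_gt u (T M) with hc | hc
    · rw [ih hc, clamp_eq_zero hc, add_zero]
    · rw [sumclamp_ge hTstep hc.le, clamp_eq_mid hTstep hc.le h]; ring

theorem pg_nonneg (heps : ∀ n, 0 ≤ eps n) (u : ℝ) : 0 ≤ pg eps T u :=
  tsum_nonneg fun n => mul_nonneg (heps n) (le_max_left _ _)

theorem pg_mono (heps : ∀ n, 0 ≤ eps n) (hT0 : T 0 = 0) (hTstep : ∀ n, T n + 1 ≤ T (n+1)) :
    Monotone (pg eps T) := by
  intro a b hab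
  set N := ⌈b⌉₊ with hN
  have hbN : b ≤ T N := le_trans (Nat.le_ceil b) (Tge hT0 hTstep N)
  rw [pg_eq_sum hTstep (le_trans hab hbN), pg_eq_sum hTstep hbN]
  exact Finset.sum_le_sum fun n _ => mul_le_mul_of_nonneg_left (clamp_mono T n hab) (heps n)

theorem pg_cont (hT0 : T 0 = 0) (hTstep : ∀ n, T n + 1 ≤ T (n+1)) :
    Continuous (pg eps T) := by
  rw [continuous_iff_continuousAt]
  intro u
  set N := ⌈u⌉₊ + 1 with hN
  have hu : u < T N :=
    lt_of_lt_of_le (by rw [hN]; push_cast; linarith [Nat.le_ceil u]) (Tge hT0 hTstep N)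
  have hcont : Continuous fun w => ∑ n ∈ range N, eps n * clamp T n w := by
    apply continuous_finset_sum
    intro n _
    simp only [clamp]
    fun_prop
  apply ContinuousAt.congr (hcont.continuousAt)
  filter_upwards [Iio_mem_nhds hu] with w hw
  exact (pg_eq_sum hTstep hw.le).symm

theorem pg_piece (hTstep : ∀ n, T n + 1 ≤ T (n+1))
    {n : ℕ} {u : ℝ} (h1 : T n ≤ u) (h2 : u ≤ T (n+1)) :
    pg eps T u = (∑ k ∈ range n, eps k * (T (k+1) - T k)) + eps n * (u - T n) := by
  rw [pg_eq_sum hTstep h2, Finset.sum_range_succ, clamp_eq_mid hTstep h1 h2]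
  congr 1
  apply Finset.sum_congr rfl
  intro k hk
  rw [clamp_eq_len hTstep (le_trans (Tmono hTstep (by simpa using hk)) h1)]

theorem pg_lip (heps : ∀ n, 0 ≤ eps n) (hepsmono : Antitone eps)
    (hT0 : T 0 = 0) (hTstep : ∀ n, T n + 1 ≤ T (n+1))
    {N : ℕ} {a b : ℝ} (ha : T N ≤ a) (hab : a ≤ b) :
    pg eps T b - pg eps T a ≤ eps N * (b - a) := by
  have Tmono' := Tmono hTstep
  have Tge' := Tge hT0 hTstep
  set M := max (⌈b⌉₊) N with hM
  have hNM : N ≤ M := le_max_right _ _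
  have hbM : b ≤ T M := by
    refine le_trans (le_trans (Nat.le_ceil b) ?_) (Tge' M)
    exact_mod_cast Nat.cast_le.mpr (le_max_left _ _)
  have haM : a ≤ T M := le_trans hab hbM
  have hT0a : T 0 ≤ a := le_trans (Tmono' (Nat.zero_le N)) ha
  have hT0b : T 0 ≤ b := le_trans hT0a hab
  rw [pg_eq_sum hTstep hbM, pg_eq_sum hTstep haM, ← Finset.sum_sub_distrib]
  have hsplit : range M = range N ∪ Ico N M := by
    rw [Finset.range_eq_Ico, Finset.range_eq_Ico]
    exact (Finset.Ico_union_Ico_eq_Ico (Nat.zero_le N) hNM).symm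
  have hdisj : Disjoint (range N) (Ico N M) := by
    simp [Finset.disjoint_left]
    intro x hx h; omega
  rw [hsplit, Finset.sum_union hdisj]
  have hzero : ∑ k ∈ range N, (eps k * clamp T k b - eps k * clamp T k a) = 0 := by
    apply Finset.sum_eq_zero
    intro k hk
    have hk' : T (k+1) ≤ T N := Tmono' (by simpa using hk)
    rw [clamp_eq_len hTstep (le_trans hk' (le_trans ha hab)),
      clamp_eq_len hTstep (le_trans hk' ha)]
    ring
  rw [hzero, zero_add]
  have hbound : ∑ k ∈ Ico N M, (eps k * clamp T k b - eps k * clamp T k a)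
      ≤ ∑ k ∈ Ico N M, eps N * (clamp T k b - clamp T k a) := by
    apply Finset.sum_le_sum
    intro k hk
    rw [← mul_sub]
    apply mul_le_mul_of_nonneg_right (hepsmono (Finset.mem_Ico.mp hk).1)
    have := clamp_mono T k hab
    linarith
  refine le_trans hbound ?_
  rw [← Finset.mul_sum]
  apply mul_le_mul_of_nonneg_left _ (heps N)
  have hb' : ∑ k ∈ range M, clamp T k b
      = ∑ k ∈ range N, clamp T k b + ∑ k ∈ Ico N M, clamp T k b := by
    rw [hsplit, Finset.sum_union hdisj]
  have ha' : ∑ k ∈ range M, clamp T k a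
      = ∑ k ∈ range N, clamp T k a + ∑ k ∈ Ico N M, clamp T k a := by
    rw [hsplit, Finset.sum_union hdisj]
  have e1 := sumclamp_le hTstep hT0b hbM
  have e2 := sumclamp_le hTstep hT0a haM
  have e3 := sumclamp_ge hTstep ha
  have e4 := sumclamp_ge hTstep (le_trans ha hab)
  rw [hb', e4] at e1
  rw [ha', e3] at e2
  have : ∑ k ∈ Ico N M, (clamp T k b - clamp T k a)
      = ∑ k ∈ Ico N M, clamp T k b - ∑ k ∈ Ico N M, clamp T k a :=
    Finset.sum_sub_distrib _ _
  rw [this]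
  linarith

end lemmas

theorem eq_top_of_nat_le {x : ℝ≥0∞} (h : ∀ N : ℕ, (N : ℝ≥0∞) ≤ x) : x = ⊤ := by
  by_contra hx
  obtain ⟨N, hN⟩ := ENNReal.exists_nat_gt hx
  exact absurd (h N) (not_le.mpr hN)

theorem tsum_top_of_one_le {Γ : Type*} [Infinite Γ] {a : Γ → ℝ≥0∞}
    (h : ∀ γ, 1 ≤ a γ) : ∑' γ, a γ = ⊤ := by
  apply eq_top_of_nat_le
  intro N
  obtain ⟨s, hs⟩ := Infinite.exists_subset_card_eq Γ N
  calc (N : ℝ≥0∞) = ∑ _γ ∈ s, 1 := by simp [hs]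
    _ ≤ ∑ γ ∈ s, a γ := Finset.sum_le_sum fun γ _ => h γ
    _ ≤ ∑' γ, a γ := ENNReal.sum_le_tsum s

theorem tail_top {Γ : Type*} [Countable Γ] {f : Γ → ℝ} {T : ℝ}
    (hfin : {γ : Γ | f γ ≤ T}.Finite) {w : Γ → ℝ}
    (htot : ∑' γ : Γ, ENNReal.ofReal (w γ) = ⊤) :
    ∑' γ : ↥{γ : Γ | f γ ≤ T}ᶜ, ENNReal.ofReal (w γ) = ⊤ := by
  classical
  set s : Set Γ := {γ : Γ | f γ ≤ T}
  have hsum : (∑' γ : ↥s, ENNReal.ofReal (w γ)) + (∑' γ : ↥sᶜ, ENNReal.ofReal (w γ))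
      = ∑' γ : Γ, ENNReal.ofReal (w γ) :=
    Summable.tsum_add_tsum_compl (f := fun γ => ENNReal.ofReal (w γ)) (s := s)
      ENNReal.summable ENNReal.summable
  have hfin' : (∑' γ : ↥s, ENNReal.ofReal (w γ)) ≠ ⊤ := by
    have : Fintype ↥s := hfin.fintype
    rw [tsum_fintype]
    exact (ENNReal.sum_lt_top.mpr fun a _ => ENNReal.ofReal_lt_top).ne
  rw [htot] at hsum
  exact (ENNReal.add_eq_top.mp hsum).resolve_left hfin'

theorem exists_next {Γ : Type*} [Countable Γ] (f : Γ → ℝ)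
    (hproper : ∀ T : ℝ, {γ : Γ | f γ ≤ T}.Finite)
    (δ ε : ℝ)
    (htail : ∑' γ : Γ, ENNReal.ofReal (Real.exp (-(δ - ε) * f γ)) = ⊤)
    (T0 G0 : ℝ) :
    ∃ T1 : ℝ, T0 + 1 ≤ T1 ∧ 1 ≤ ∑ γ ∈ ((hproper T1).toFinset.filter
      fun γ => T0 < f γ), Real.exp (G0 + ε * (f γ - T0) - δ * f γ) := by
  classical
  set s : Set Γ := {γ : Γ | f γ ≤ T0} with hs
  have htail' : ∑' γ : ↥sᶜ, ENNReal.ofReal (Real.exp (-(δ - ε) * f γ)) = ⊤ :=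
    tail_top (hproper T0) htail
  have hw : ∀ γ : Γ, Real.exp (G0 + ε * (f γ - T0) - δ * f γ)
      = Real.exp (G0 - ε * T0) * Real.exp (-(δ - ε) * f γ) := by
    intro γ; rw [← Real.exp_add]; ring_nf
  have hwt : ∑' γ : ↥sᶜ, ENNReal.ofReal (Real.exp (G0 + ε * (f γ - T0) - δ * f γ)) = ⊤ := by
    have : ∀ γ : ↥sᶜ, ENNReal.ofReal (Real.exp (G0 + ε * (f γ - T0) - δ * f γ))
        = ENNReal.ofReal (Real.exp (G0 - ε * T0))
          * ENNReal.ofReal (Real.exp (-(δ - ε) * f γ)) := by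
      intro γ
      rw [hw γ, ENNReal.ofReal_mul (Real.exp_nonneg _)]
    rw [tsum_congr this, ENNReal.tsum_mul_left, htail', ENNReal.mul_top]
    simp [Real.exp_pos, (Real.exp_pos _).ne']
  have h1 : (1 : ℝ≥0∞)
      < ∑' γ : ↥sᶜ, ENNReal.ofReal (Real.exp (G0 + ε * (f γ - T0) - δ * f γ)) := by
    rw [hwt]; exact ENNReal.one_lt_top
  rw [ENNReal.tsum_eq_iSup_sum, lt_iSup_iff] at h1
  obtain ⟨F, hF⟩ := h1
  have hFne : F.Nonempty := by
    rcases Finset.eq_empty_or_nonempty F with h | h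
    · rw [h] at hF; simp at hF
    · exact h
  set T1 : ℝ := max (T0 + 1) (F.sup' hFne fun γ => f γ.1) with hT1
  refine ⟨T1, le_max_left _ _, ?_⟩
  have hsub : F.image Subtype.val ⊆ (hproper T1).toFinset.filter fun γ => T0 < f γ := by
    intro γ hγ
    obtain ⟨γ', hγ', rfl⟩ := Finset.mem_image.mp hγ
    rw [Finset.mem_filter, Set.Finite.mem_toFinset]
    constructor
    · exact Set.mem_setOf.mpr
        (le_trans (Finset.le_sup' (fun γ => f γ.1) hγ') (le_max_right _ _))
    · exact not_le.mp γ'.2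
  have hFsum : (1 : ℝ)
      ≤ ∑ γ ∈ F.image Subtype.val, Real.exp (G0 + ε * (f γ - T0) - δ * f γ) := by
    rw [Finset.sum_image (fun a _ b _ h => Subtype.val_injective h)]
    have h2 := hF.le
    rw [← ENNReal.ofReal_sum_of_nonneg (fun γ _ => Real.exp_nonneg _)] at h2
    by_contra hc
    push_neg at hc
    have : ENNReal.ofReal (∑ γ ∈ F, Real.exp (G0 + ε * (f ↑γ - T0) - δ * f ↑γ)) < 1 := by
      rw [← ENNReal.ofReal_one]
      exact (ENNReal.ofReal_lt_ofReal_iff_of_nonneg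
        (Finset.sum_nonneg fun γ _ => Real.exp_nonneg _)).mpr hc
    exact absurd this (not_lt.mpr h2)
  exact le_trans hFsum
    (Finset.sum_le_sum_of_subset_of_nonneg hsub fun γ _ _ => Real.exp_nonneg _)

end PattersonAux

open PattersonAux

/-- Patterson's lemma: if `f : Γ → [0,∞)` is proper on the countable (infinite) set `Γ` and
the series `Σ_γ e^{-s f(γ)}` has finite critical exponent `δ`, then there is a continuous
nondecreasing positive function `h` on `(0, ∞)` such that the weighted series
`Σ_γ h(e^{f(γ)}) e^{-s f(γ)}` converges for `s > δ` and diverges for `s ≤ δ`, and for every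
`ε > 0` there is `ν₀ > 0` with `h(ν t) ≤ t^ε h(ν)` whenever `t > 1` and `ν > ν₀`. -/
theorem stmt13 {Γ : Type*} [Countable Γ] [Infinite Γ] (f : Γ → ℝ)
    (hf0 : ∀ γ, 0 ≤ f γ) (hproper : ∀ T : ℝ, {γ : Γ | f γ ≤ T}.Finite)
    (δ : ℝ) (hδ0 : 0 ≤ δ)
    (hconv : ∀ s : ℝ, δ < s → (∑' γ : Γ, ENNReal.ofReal (Real.exp (-s * f γ))) < ⊤)
    (hdiv : ∀ s : ℝ, 0 ≤ s → s < δ →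
      (∑' γ : Γ, ENNReal.ofReal (Real.exp (-s * f γ))) = ⊤) :
    ∃ h : ℝ → ℝ, ContinuousOn h (Set.Ioi 0) ∧ MonotoneOn h (Set.Ioi 0) ∧
      (∀ ν : ℝ, 0 < ν → 0 < h ν) ∧
      (∀ s : ℝ, δ < s →
        (∑' γ : Γ, ENNReal.ofReal (h (Real.exp (f γ)) * Real.exp (-s * f γ))) < ⊤) ∧
      (∀ s : ℝ, s ≤ δ →
        (∑' γ : Γ, ENNReal.ofReal (h (Real.exp (f γ)) * Real.exp (-s * f γ))) = ⊤) ∧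
      (∀ ε : ℝ, 0 < ε → ∃ ν0 : ℝ, 0 < ν0 ∧
        ∀ ν t : ℝ, 1 < t → ν0 < ν → h (ν * t) ≤ t ^ ε * h ν) := by
  classical
  by_cases htop : (∑' γ : Γ, ENNReal.ofReal (Real.exp (-δ * f γ))) = ⊤
  · -- easy case: the unweighted series already diverges at δ; take h ≡ 1
    refine ⟨fun _ => 1, continuousOn_const, monotoneOn_const.mono le_rfl, fun _ _ => one_pos,
      ?_, ?_, ?_⟩
    · intro s hs
      simpa using hconv s hs
    · intro s hs
      simp only [one_mul]
      rw [← top_le_iff, ← htop]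
      apply ENNReal.tsum_le_tsum
      intro γ
      apply ENNReal.ofReal_le_ofReal
      apply Real.exp_le_exp.mpr
      have := hf0 γ
      nlinarith
    · intro ε hε
      refine ⟨1, one_pos, fun ν t ht hν => ?_⟩
      have h1 : (1:ℝ) ≤ t ^ ε := by
        calc (1:ℝ) = t ^ (0:ℝ) := (Real.rpow_zero t).symm
          _ ≤ t ^ ε := Real.rpow_le_rpow_of_exponent_le ht.le hε.le
      simpa using h1
  · -- hard case: the unweighted series converges at δ
    have hδpos : 0 < δ := by
      rcases eq_or_lt_of_le hδ0 with h | h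
      · exfalso
        apply htop
        apply tsum_top_of_one_le
        intro γ
        rw [← h]
        simp
      · exact h
    set eps : ℕ → ℝ := fun n => δ / (n + 2) with hepsdef
    have heps0 : ∀ n, 0 < eps n := fun n => div_pos hδpos (by positivity)
    have hepsmono : Antitone eps := by
      intro m n hmn
      have hc : (m:ℝ) ≤ n := Nat.cast_le.mpr hmn
      apply div_le_div_of_nonneg_left hδpos.le (by positivity)
      linarith
    have hepslt : ∀ n, eps n < δ := by
      intro n
      apply div_lt_self hδpos
      push_cast; linarith [Nat.cast_nonneg (α := ℝ) n]
    have htail : ∀ n, ∑' γ : Γ, ENNReal.ofReal (Real.exp (-(δ - eps n) * f γ)) = ⊤ :=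
      fun n => hdiv _ (by linarith [hepslt n]) (by linarith [heps0 n])
    have hex : ∀ n, ∀ T0 G0 : ℝ, ∃ T1 : ℝ, T0 + 1 ≤ T1 ∧
        1 ≤ ∑ γ ∈ ((hproper T1).toFinset.filter fun γ => T0 < f γ),
          Real.exp (G0 + eps n * (f γ - T0) - δ * f γ) :=
      fun n => exists_next f hproper δ (eps n) (htail n)
    choose Fn hF1 hF2 using hex
    set P : ℕ → ℝ × ℝ := fun n => Nat.rec ((0:ℝ), (0:ℝ))
      (fun k p => (Fn k p.1 p.2, p.2 + eps k * (Fn k p.1 p.2 - p.1))) n with hPdef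
    set T : ℕ → ℝ := fun n => (P n).1 with hTdef
    set G : ℕ → ℝ := fun n => (P n).2 with hGdef
    have hT0 : T 0 = 0 := rfl
    have hTsucc : ∀ n, T (n+1) = Fn n (T n) (G n) := fun n => rfl
    have hGsucc : ∀ n, G (n+1) = G n + eps n * (T (n+1) - T n) := fun n => rfl
    have hTstep : ∀ n, T n + 1 ≤ T (n+1) := fun n => hF1 n (T n) (G n)
    have hblock : ∀ n, 1 ≤ ∑ γ ∈ ((hproper (T (n+1))).toFinset.filter
        fun γ => T n < f γ), Real.exp (G n + eps n * (f γ - T n) - δ * f γ) :=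
      fun n => hF2 n (T n) (G n)
    have hGsum : ∀ n, G n = ∑ k ∈ Finset.range n, eps k * (T (k+1) - T k) := by
      intro n
      induction n with
      | zero => simp [hGdef, hPdef]
      | succ n ih => rw [Finset.sum_range_succ, ← ih, hGsucc n]
    have Tmono' : Monotone T := Tmono hTstep
    have heps0' : ∀ n, 0 ≤ eps n := fun n => (heps0 n).le
    -- the weight function
    refine ⟨fun x => Real.exp (pg eps T (Real.log x)), ?_, ?_, ?_, ?_, ?_, ?_⟩
    · -- continuity
      exact (Real.continuous_exp.comp (pg_cont hT0 hTstep)).comp_continuousOn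
        (Real.continuousOn_log.mono (fun x hx => by
          simp only [Set.mem_compl_iff, Set.mem_singleton_iff]
          exact ne_of_gt hx))
    · -- monotonicity
      intro x hx y hy hxy
      exact Real.exp_le_exp.mpr (pg_mono heps0' hT0 hTstep (Real.log_le_log hx hxy))
    · -- positivity
      exact fun ν _ => Real.exp_pos _
    · -- convergence for s > δ
      intro s hs
      have hsδ : 0 < s - δ := by linarith
      obtain ⟨N, hN⟩ := exists_nat_gt (δ / (s - δ))
      have hδN : δ < (s - δ) * N := by rw [div_lt_iff₀ hsδ] at hN; linarith
      have hepsN : eps N < s - δ := by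
        rw [hepsdef]
        rw [div_lt_iff₀ (by positivity)]
        nlinarith [Nat.cast_nonneg (α := ℝ) N]
      set C : ℝ := Real.exp (pg eps T (T N) - eps N * T N) with hC
      have hkey : ∀ γ : Γ, T N ≤ f γ →
          Real.exp (pg eps T (Real.log (Real.exp (f γ)))) * Real.exp (-s * f γ)
            ≤ C * Real.exp (-(s - eps N) * f γ) := by
        intro γ hγ
        rw [Real.log_exp, ← Real.exp_add, hC, ← Real.exp_add]
        apply Real.exp_le_exp.mpr
        have := pg_lip heps0' hepsmono hT0 hTstep (le_refl (T N)) hγ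
        nlinarith
      set A : Set Γ := {γ : Γ | f γ ≤ T N} with hA
      have hsplit : (∑' γ : ↥A, ENNReal.ofReal
            (Real.exp (pg eps T (Real.log (Real.exp (f γ)))) * Real.exp (-s * f γ)))
          + (∑' γ : ↥Aᶜ, ENNReal.ofReal
            (Real.exp (pg eps T (Real.log (Real.exp (f γ)))) * Real.exp (-s * f γ)))
          = ∑' γ : Γ, ENNReal.ofReal
            (Real.exp (pg eps T (Real.log (Real.exp (f γ)))) * Real.exp (-s * f γ)) :=
        Summable.tsum_add_tsum_compl (s := A) (f := fun γ => ENNReal.ofReal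
          (Real.exp (pg eps T (Real.log (Real.exp (f γ)))) * Real.exp (-s * f γ)))
          ENNReal.summable ENNReal.summable
      rw [← hsplit]
      apply ENNReal.add_lt_top.mpr
      constructor
      · have : Fintype ↥A := (hproper (T N)).fintype
        rw [tsum_fintype]
        exact ENNReal.sum_lt_top.mpr fun a _ => ENNReal.ofReal_lt_top
      · have hb : (∑' γ : ↥Aᶜ, ENNReal.ofReal
            (Real.exp (pg eps T (Real.log (Real.exp (f γ)))) * Real.exp (-s * f γ)))
            ≤ ENNReal.ofReal C * ∑' γ : Γ, ENNReal.ofReal (Real.exp (-(s - eps N) * f γ)) := by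
          calc _ ≤ ∑' γ : ↥Aᶜ, ENNReal.ofReal (C * Real.exp (-(s - eps N) * f γ)) := by
                apply ENNReal.tsum_le_tsum
                intro γ
                exact ENNReal.ofReal_le_ofReal (hkey γ (le_of_lt (not_le.mp γ.2)))
            _ = ∑' γ : ↥Aᶜ, ENNReal.ofReal C * ENNReal.ofReal (Real.exp (-(s - eps N) * f γ)) := by
                apply tsum_congr
                intro γ
                rw [ENNReal.ofReal_mul (Real.exp_nonneg _)]
            _ = ENNReal.ofReal C * ∑' γ : ↥Aᶜ, ENNReal.ofReal (Real.exp (-(s - eps N) * f γ)) :=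
                ENNReal.tsum_mul_left
            _ ≤ _ := by
                apply mul_le_mul_right
                exact ENNReal.tsum_comp_le_tsum_of_injective Subtype.val_injective _
        apply lt_of_le_of_lt hb
        apply ENNReal.mul_lt_top ENNReal.ofReal_lt_top
        exact hconv (s - eps N) (by linarith)
    · -- divergence for s ≤ δ
      intro s hs
      have hδdiv : (∑' γ : Γ, ENNReal.ofReal
          (Real.exp (pg eps T (Real.log (Real.exp (f γ)))) * Real.exp (-δ * f γ))) = ⊤ := by
        apply eq_top_of_nat_le
        intro N
        set B : ℕ → Finset Γ := fun n =>
          (hproper (T (n+1))).toFinset.filter fun γ => T n < f γ with hB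
        have hmemB : ∀ n γ, γ ∈ B n → T n < f γ ∧ f γ ≤ T (n+1) := by
          intro n γ hγ
          rw [hB, Finset.mem_filter, Set.Finite.mem_toFinset] at hγ
          exact ⟨hγ.2, hγ.1⟩
        have hdisjB : ∀ m n, m < n → Disjoint (B m) (B n) := by
          intro m n hmn
          rw [Finset.disjoint_left]
          intro γ hγm hγn
          have h1 := (hmemB m γ hγm).2
          have h2 := (hmemB n γ hγn).1
          have h3 : T (m+1) ≤ T n := Tmono' hmn
          linarith
        have hpd : Set.PairwiseDisjoint ↑(Finset.range N) B := by
          intro m _ n _ hmn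
          rcases hmn.lt_or_gt with h | h
          · exact hdisjB m n h
          · exact (hdisjB n m h).symm
        have hterm : ∀ n, ∀ γ ∈ B n,
            ENNReal.ofReal (Real.exp (pg eps T (Real.log (Real.exp (f γ))))
              * Real.exp (-δ * f γ))
            = ENNReal.ofReal (Real.exp (G n + eps n * (f γ - T n) - δ * f γ)) := by
          intro n γ hγ
          obtain ⟨h1, h2⟩ := hmemB n γ hγ
          rw [Real.log_exp, ← Real.exp_add,
            pg_piece hTstep h1.le h2, ← hGsum n]
          ring_nf
        calc (N : ℝ≥0∞) = ∑ n ∈ Finset.range N, 1 := by simp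
          _ ≤ ∑ n ∈ Finset.range N, ∑ γ ∈ B n, ENNReal.ofReal
              (Real.exp (pg eps T (Real.log (Real.exp (f γ)))) * Real.exp (-δ * f γ)) := by
              apply Finset.sum_le_sum
              intro n _
              rw [Finset.sum_congr rfl (hterm n),
                ← ENNReal.ofReal_sum_of_nonneg (fun γ _ => Real.exp_nonneg _),
                ← ENNReal.ofReal_one]
              exact ENNReal.ofReal_le_ofReal (hblock n)
          _ = ∑ γ ∈ (Finset.range N).biUnion B, ENNReal.ofReal
              (Real.exp (pg eps T (Real.log (Real.exp (f γ)))) * Real.exp (-δ * f γ)) :=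
              (Finset.sum_biUnion hpd).symm
          _ ≤ _ := ENNReal.sum_le_tsum _
      rw [← top_le_iff, ← hδdiv]
      apply ENNReal.tsum_le_tsum
      intro γ
      apply ENNReal.ofReal_le_ofReal
      apply mul_le_mul_of_nonneg_left _ (Real.exp_nonneg _)
      apply Real.exp_le_exp.mpr
      have := hf0 γ
      nlinarith
    · -- slow variation
      intro ε hε
      obtain ⟨N, hN⟩ := exists_nat_gt (δ / ε)
      have hepsN : eps N ≤ ε := by
        rw [hepsdef]
        rw [div_le_iff₀ (by positivity)]
        have : δ < ε * N := by rw [div_lt_iff₀ hε] at hN; linarith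
        nlinarith [Nat.cast_nonneg (α := ℝ) N]
      refine ⟨Real.exp (T N), Real.exp_pos _, ?_⟩
      intro ν t ht hν
      have hν0 : 0 < ν := lt_trans (Real.exp_pos _) hν
      have ht0 : 0 < t := lt_trans one_pos ht
      have hlogν : T N ≤ Real.log ν := by
        have h2 := Real.log_lt_log (Real.exp_pos (T N)) hν
        rw [Real.log_exp] at h2
        exact h2.le
      have hlogt : 0 < Real.log t := Real.log_pos ht
      show Real.exp (pg eps T (Real.log (ν * t))) ≤ t ^ ε * Real.exp (pg eps T (Real.log ν))
      rw [Real.log_mul hν0.ne' ht0.ne']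
      have hlip := pg_lip heps0' hepsmono hT0 hTstep hlogν
        (by linarith : Real.log ν ≤ Real.log ν + Real.log t)
      have h1 : Real.exp (pg eps T (Real.log ν + Real.log t))
          ≤ Real.exp (pg eps T (Real.log ν)) * Real.exp (eps N * Real.log t) := by
        rw [← Real.exp_add]
        apply Real.exp_le_exp.mpr
        have : eps N * (Real.log ν + Real.log t - Real.log ν) = eps N * Real.log t := by ring
        linarith [hlip, this ▸ hlip]
      apply le_trans h1
      rw [mul_comm]
      apply mul_le_mul_of_nonneg_right _ (Real.exp_nonneg _)
      calc Real.exp (eps N * Real.log t) = t ^ eps N := by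
            rw [Real.rpow_def_of_pos ht0, mul_comm]
        _ ≤ t ^ ε := Real.rpow_le_rpow_of_exponent_le ht.le hepsN
end
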